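/- Let $G$ be a finite group acting on a finite-dimensional module $V$ over a field $F$, and let $V_0 := \{ v \in V : f(v) = 0 \text{ for all } f \in (V^*)^G \}$ be the common zero set of the linear invariants. Then $V_0$ is a $G$-submodule of $V$, and $\delta(G,V) = 1$ if and only if $V^G \neq \{0\}$ and $V^G \cap V_0 = \{0\}$. -/

import Mathlib

open MvPolynomial

/-- The action of a matrix `A` on polynomials, substituting each variable `X i`
by the linear form `∑ j, A i j • X j`, so that `(matAct A f)(v) = f(A ⬝ v)`. -/
noncomputable def matAct {F : Type*} [Field F] {N : ℕ} (A : Matrix (Fin N) (Fin N) F) :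
    MvPolynomial (Fin N) F →ₐ[F] MvPolynomial (Fin N) F :=
  aeval fun i => ∑ j, C (A i j) * X j

/-- `f` is an invariant of the representation `ρ`: `σ(f) = f ∘ σ⁻¹ = f` for all `σ ∈ G`. -/
def IsInv {F : Type*} [Field F] {N : ℕ} {G : Type*} [Group G]
    (ρ : G →* Matrix.GeneralLinearGroup (Fin N) F) (f : MvPolynomial (Fin N) F) : Prop :=
  ∀ σ : G, matAct ((ρ σ⁻¹ : Matrix.GeneralLinearGroup (Fin N) F) : Matrix (Fin N) (Fin N) F) f = f

/-- `v` is a fixed point of the representation `ρ`. -/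
def IsFixedPt {F : Type*} [Field F] {N : ℕ} {G : Type*} [Group G]
    (ρ : G →* Matrix.GeneralLinearGroup (Fin N) F) (v : Fin N → F) : Prop :=
  ∀ σ : G, Matrix.mulVec ((ρ σ : Matrix.GeneralLinearGroup (Fin N) F) : Matrix (Fin N) (Fin N) F) v = v

/-- `ε(G,v)`: minimal positive degree of a homogeneous invariant not vanishing at `v`. -/
noncomputable def epsGV {F : Type*} [Field F] {N : ℕ} {G : Type*} [Group G]
    (ρ : G →* Matrix.GeneralLinearGroup (Fin N) F) (v : Fin N → F) : ℕ :=
  sInf {d : ℕ | 0 < d ∧ ∃ f : MvPolynomial (Fin N) F,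
    IsInv ρ f ∧ f.IsHomogeneous d ∧ eval v f ≠ 0}

/-- `δ(G,V)`: the degree of reductivity, i.e. the supremum of `ε(G,v)` over nonzero
fixed points `v` (and `0` if `V^G = {0}`). -/
noncomputable def deltaGV {F : Type*} [Field F] {N : ℕ} {G : Type*} [Group G]
    (ρ : G →* Matrix.GeneralLinearGroup (Fin N) F) : ℕ :=
  sSup {e : ℕ | ∃ v : Fin N → F, v ≠ 0 ∧ IsFixedPt ρ v ∧ e = epsGV ρ v}

/-- `V₀`: the common zero set of the `G`-invariant linear forms. -/
def Vzero {F : Type*} [Field F] {N : ℕ} {G : Type*} [Group G]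
    (ρ : G →* Matrix.GeneralLinearGroup (Fin N) F) : Set (Fin N → F) :=
  {v | ∀ f : MvPolynomial (Fin N) F, IsInv ρ f → f.IsHomogeneous 1 → eval v f = 0}

lemma eval_matAct {F : Type*} [Field F] {N : ℕ} (A : Matrix (Fin N) (Fin N) F)
    (v : Fin N → F) (f : MvPolynomial (Fin N) F) :
    eval v (matAct A f) = eval (A.mulVec v) f := by
  have : (eval v).comp (matAct A).toRingHom = eval (A.mulVec v) := by
    apply MvPolynomial.ringHom_ext
    · intro r; simp [matAct]
    · intro i
      simp [matAct, Matrix.mulVec, dotProduct]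
  exact congrFun (congrArg DFunLike.coe this) f

lemma matAct_matAct {F : Type*} [Field F] {N : ℕ} (A B : Matrix (Fin N) (Fin N) F)
    (f : MvPolynomial (Fin N) F) :
    matAct A (matAct B f) = matAct (B * A) f := by
  have : (matAct A).comp (matAct B) = matAct (B * A) := by
    apply MvPolynomial.algHom_ext
    intro i
    simp only [AlgHom.comp_apply, matAct, aeval_X, map_sum, map_mul, aeval_C, Finset.mul_sum,
      Matrix.mul_apply]
    rw [Finset.sum_comm]
    refine Finset.sum_congr rfl fun k _ => ?_
    rw [Finset.sum_mul]
    refine Finset.sum_congr rfl fun j _ => ?_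
    simp [algebraMap_eq, mul_assoc]
  exact congrFun (congrArg DFunLike.coe this) f

lemma degree_one_single {N : ℕ} {m : Fin N →₀ ℕ} (hd : m.degree = 1) :
    ∃ i, m = Finsupp.single i 1 := by
  have hc : Multiset.card m.toMultiset = 1 := by
    rw [Finsupp.card_toMultiset]; exact hd
  obtain ⟨a, ha⟩ := Multiset.card_eq_one.mp hc
  refine ⟨a, ?_⟩
  have := congrArg Multiset.toFinsupp ha
  rwa [Finsupp.toMultiset_toFinsupp, Multiset.toFinsupp_singleton] at this

lemma homog1_repr {F : Type*} [Field F] {N : ℕ} {f : MvPolynomial (Fin N) F}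
    (hf : f.IsHomogeneous 1) :
    f = ∑ i, C (f.coeff (Finsupp.single i 1)) * X i := by
  ext m
  rw [coeff_sum]
  simp only [coeff_C_mul, coeff_X']
  by_cases hd : m.degree = 1
  · obtain ⟨i, rfl⟩ := degree_one_single hd
    rw [Finset.sum_eq_single i]
    · simp
    · intro j _ hj
      rw [if_neg, mul_zero]
      intro h
      exact hj (Finsupp.single_left_injective one_ne_zero h)
    · simp
  · rw [hf.coeff_eq_zero hd, Finset.sum_eq_zero]
    intro j _
    rw [if_neg, mul_zero]
    intro h
    exact hd (by rw [← h]; simp [Finsupp.degree_single])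

lemma eval_homog1_add {F : Type*} [Field F] {N : ℕ} {f : MvPolynomial (Fin N) F}
    (hf : f.IsHomogeneous 1) (v w : Fin N → F) :
    eval (v + w) f = eval v f + eval w f := by
  rw [homog1_repr hf]
  simp [Finset.sum_add_distrib, mul_add]

lemma eval_homog1_smul {F : Type*} [Field F] {N : ℕ} {f : MvPolynomial (Fin N) F}
    (hf : f.IsHomogeneous 1) (c : F) (v : Fin N → F) :
    eval (c • v) f = c * eval v f := by
  rw [homog1_repr hf]
  simp [Finset.mul_sum]
  exact Finset.sum_congr rfl fun x _ => by ring

lemma isInv_matAct {F : Type*} [Field F] {N : ℕ} {G : Type*} [Group G]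
    {ρ : G →* Matrix.GeneralLinearGroup (Fin N) F} {f : MvPolynomial (Fin N) F}
    (hf : IsInv ρ f) (σ : G) :
    matAct ((ρ σ : Matrix.GeneralLinearGroup (Fin N) F) : Matrix (Fin N) (Fin N) F) f = f := by
  simpa using hf σ⁻¹

/-- the norm construction: `card G` belongs to the `ε` set of any nonzero fixed point. -/
lemma card_mem_epsSet {F : Type*} [Field F] {N : ℕ} {G : Type*} [Group G] [Fintype G]
    (ρ : G →* Matrix.GeneralLinearGroup (Fin N) F) {v : Fin N → F} (hv : v ≠ 0)
    (hfix : IsFixedPt ρ v) :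
    Fintype.card G ∈ {d : ℕ | 0 < d ∧ ∃ f : MvPolynomial (Fin N) F,
      IsInv ρ f ∧ f.IsHomogeneous d ∧ eval v f ≠ 0} := by
  obtain ⟨i, hi⟩ : ∃ i, v i ≠ 0 := by
    by_contra h
    push_neg at h
    exact hv (funext h)
  refine ⟨Fintype.card_pos, ∏ σ : G, matAct ((ρ σ : Matrix.GeneralLinearGroup (Fin N) F) :
      Matrix (Fin N) (Fin N) F) (X i), ?_, ?_, ?_⟩
  · intro τ
    rw [map_prod]
    have key : ∀ σ : G, matAct ((ρ τ⁻¹ : Matrix.GeneralLinearGroup (Fin N) F) :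
        Matrix (Fin N) (Fin N) F)
        (matAct ((ρ σ : Matrix.GeneralLinearGroup (Fin N) F) : Matrix (Fin N) (Fin N) F) (X i))
        = matAct ((ρ (σ * τ⁻¹) : Matrix.GeneralLinearGroup (Fin N) F) :
          Matrix (Fin N) (Fin N) F) (X i) := by
      intro σ
      rw [matAct_matAct]
      congr 1
      rw [map_mul]
      rfl
    simp only [key]
    exact Equiv.prod_comp (Equiv.mulRight τ⁻¹) (fun σ => matAct
      ((ρ σ : Matrix.GeneralLinearGroup (Fin N) F) : Matrix (Fin N) (Fin N) F) (X i))
  · have h1 : ∀ σ : G, (matAct ((ρ σ : Matrix.GeneralLinearGroup (Fin N) F) :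
        Matrix (Fin N) (Fin N) F) (X i)).IsHomogeneous 1 := by
      intro σ
      rw [matAct, aeval_X]
      exact IsHomogeneous.sum _ _ _ fun j _ => isHomogeneous_C_mul_X _ _
    have := IsHomogeneous.prod Finset.univ (fun σ : G => matAct
      ((ρ σ : Matrix.GeneralLinearGroup (Fin N) F) : Matrix (Fin N) (Fin N) F) (X i))
      (fun _ => 1) (fun σ _ => h1 σ)
    simpa using this
  · rw [map_prod]
    apply Finset.prod_ne_zero_iff.mpr
    intro σ _
    rw [eval_matAct, hfix σ]
    simpa using hi


lemma epsGV_mem {F : Type*} [Field F] {N : ℕ} {G : Type*} [Group G] [Fintype G]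
    (ρ : G →* Matrix.GeneralLinearGroup (Fin N) F) {v : Fin N → F} (hv : v ≠ 0)
    (hfix : IsFixedPt ρ v) :
    0 < epsGV ρ v ∧ ∃ f : MvPolynomial (Fin N) F,
      IsInv ρ f ∧ f.IsHomogeneous (epsGV ρ v) ∧ eval v f ≠ 0 :=
  Nat.sInf_mem ⟨_, card_mem_epsSet ρ hv hfix⟩

lemma epsGV_eq_one_iff {F : Type*} [Field F] {N : ℕ} {G : Type*} [Group G] [Fintype G]
    (ρ : G →* Matrix.GeneralLinearGroup (Fin N) F) {v : Fin N → F} (hv : v ≠ 0)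
    (hfix : IsFixedPt ρ v) :
    epsGV ρ v = 1 ↔ v ∉ Vzero ρ := by
  constructor
  · intro h hzero
    obtain ⟨-, f, hinv, hhom, hne⟩ := epsGV_mem ρ hv hfix
    rw [h] at hhom
    exact hne (hzero f hinv hhom)
  · intro h
    simp only [Vzero, Set.mem_setOf_eq] at h
    push_neg at h
    obtain ⟨f, hinv, hhom, hne⟩ := h
    have h1 : (1 : ℕ) ∈ {d : ℕ | 0 < d ∧ ∃ f : MvPolynomial (Fin N) F,
        IsInv ρ f ∧ f.IsHomogeneous d ∧ eval v f ≠ 0} := ⟨one_pos, f, hinv, hhom, hne⟩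
    have hle : epsGV ρ v ≤ 1 := Nat.sInf_le h1
    have hge := (epsGV_mem ρ hv hfix).1
    omega

theorem stmt14 {F : Type*} [Field F] {N : ℕ} {G : Type*} [Group G] [Fintype G]
    (ρ : G →* Matrix.GeneralLinearGroup (Fin N) F) :
    (∃ W : Submodule F (Fin N → F), (W : Set (Fin N → F)) = Vzero ρ ∧
      ∀ σ : G, ∀ v ∈ W,
        Matrix.mulVec ((ρ σ : Matrix.GeneralLinearGroup (Fin N) F) : Matrix (Fin N) (Fin N) F) v ∈ W) ∧
    (deltaGV ρ = 1 ↔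
      ((∃ v : Fin N → F, v ≠ 0 ∧ IsFixedPt ρ v) ∧
        ∀ v : Fin N → F, IsFixedPt ρ v → v ∈ Vzero ρ → v = 0)) := by
  constructor
  · -- the submodule part
    refine ⟨{ carrier := Vzero ρ
              add_mem' := ?_
              zero_mem' := ?_
              smul_mem' := ?_ }, rfl, ?_⟩
    · intro a b ha hb f hinv hhom
      rw [eval_homog1_add hhom, ha f hinv hhom, hb f hinv hhom, add_zero]
    · intro f hinv hhom
      rw [homog1_repr hhom]
      simp
    · intro c a ha f hinv hhom
      rw [eval_homog1_smul hhom, ha f hinv hhom, mul_zero]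
    · intro σ v hv f hinv hhom
      show eval _ f = 0
      rw [← eval_matAct, isInv_matAct hinv σ]
      exact hv f hinv hhom
  · constructor
    · intro hδ
      have hex : ∃ v : Fin N → F, v ≠ 0 ∧ IsFixedPt ρ v := by
        by_contra hno
        have hemp : {e : ℕ | ∃ v : Fin N → F, v ≠ 0 ∧ IsFixedPt ρ v ∧ e = epsGV ρ v} = ∅ := by
          ext e
          simp only [Set.mem_setOf_eq, Set.mem_empty_iff_false, iff_false]
          rintro ⟨v, h1, h2, -⟩
          exact hno ⟨v, h1, h2⟩
        rw [deltaGV, hemp, csSup_empty] at hδ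
        simp at hδ
      refine ⟨hex, ?_⟩
      intro v hfix hvz
      by_contra hvne
      have hmem : epsGV ρ v ∈ {e : ℕ | ∃ v : Fin N → F, v ≠ 0 ∧ IsFixedPt ρ v ∧ e = epsGV ρ v} :=
        ⟨v, hvne, hfix, rfl⟩
      have hbdd : BddAbove {e : ℕ | ∃ v : Fin N → F, v ≠ 0 ∧ IsFixedPt ρ v ∧ e = epsGV ρ v} :=
        ⟨Fintype.card G, by
          rintro e ⟨w, hw, hwf, rfl⟩
          exact Nat.sInf_le (card_mem_epsSet ρ hw hwf)⟩
      have hle : epsGV ρ v ≤ deltaGV ρ := le_csSup hbdd hmem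
      rw [hδ] at hle
      have hge := (epsGV_mem ρ hvne hfix).1
      have h1 : epsGV ρ v = 1 := le_antisymm hle hge
      exact (epsGV_eq_one_iff ρ hvne hfix).mp h1 hvz
    · rintro ⟨⟨v0, hv0, hfix0⟩, hsep⟩
      have hT : {e : ℕ | ∃ v : Fin N → F, v ≠ 0 ∧ IsFixedPt ρ v ∧ e = epsGV ρ v} = {1} := by
        ext e
        simp only [Set.mem_setOf_eq, Set.mem_singleton_iff]
        constructor
        · rintro ⟨v, hv, hfix, rfl⟩
          exact (epsGV_eq_one_iff ρ hv hfix).mpr fun hz => hv (hsep v hfix hz)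
        · rintro rfl
          exact ⟨v0, hv0, hfix0,
            ((epsGV_eq_one_iff ρ hv0 hfix0).mpr fun hz => hv0 (hsep v0 hfix0 hz)).symm⟩
      rw [deltaGV, hT]
      exact csSup_singleton 1
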